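/- Let λ = (λ_1, …, λ_p) be a partition of r and let d ∈ {1, …, p}, j ∈ {1, …, r}, m ∈ ℤ. Then the pair (j, m) is non-negative of level d with respect to λ if and only if: m ≥ 0 in case λ(j) ≤ d, and m ≥ d − λ(j) in case λ(j) > d. -/

import Mathlib

open Finset

/-- The partial sums `μ_t = λ_1 + ⋯ + λ_t` of a tuple `λ : Fin p → ℕ`
(with `μ_0 = 0`); on the Lean side `partialSum lam t = ∑_{i < t} λ_i`
with `0`-based indexing of `λ`. -/
def partialSum {p : ℕ} (lam : Fin p → ℕ) (t : ℕ) : ℕ :=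
  ∑ i ∈ univ.filter (fun i : Fin p => (i : ℕ) < t), lam i

/-- `λ(j) = min { t : μ_t ≥ j }` (for `1 ≤ j ≤ r` this minimum lies in `{1, …, p}`). -/
noncomputable def lamIdx {p : ℕ} (lam : Fin p → ℕ) (j : ℕ) : ℕ :=
  sInf {t : ℕ | j ≤ partialSum lam t}

/-- The pair `(j, m)` is non-negative of level `d` with respect to `λ`:
either `m ≥ 0`, or for every pair of tuples `(j_1, …, j_p) ∈ ℕ^p`, `(m_1, …, m_p) ∈ ℤ^p`
with `j_k ≤ λ_k`, `Σ j_k = j`, `Σ m_k = m` and `m_k = 0` whenever `j_k = 0`,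
either some `m_k > 0`, or there are at least `d` indices `k` with `m_k = 0` and `j_k > 0`. -/
def NonNegOfLevel {p : ℕ} (lam : Fin p → ℕ) (d : ℕ) (j : ℕ) (m : ℤ) : Prop :=
  0 ≤ m ∨
    ∀ (jv : Fin p → ℕ) (mv : Fin p → ℤ),
      (∀ k, jv k ≤ lam k) → (∑ k, jv k) = j → (∑ k, mv k) = m →
      (∀ k, jv k = 0 → mv k = 0) →
      ((∃ k, 0 < mv k) ∨
        d ≤ (univ.filter (fun k => mv k = 0 ∧ 0 < jv k)).card)

/-- The pair `(j, m)` is non-negative of level `d` with respect to the partition `λ`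
if and only if `m ≥ 0` when `λ(j) ≤ d`, and `m ≥ d − λ(j)` when `λ(j) > d`. -/
lemma filter_lt_succ {p t : ℕ} (ht : t < p) :
    (univ.filter (fun k : Fin p => (k : ℕ) < t + 1)) =
      insert ⟨t, ht⟩ (univ.filter (fun k : Fin p => (k : ℕ) < t)) := by
  ext k
  simp only [mem_filter, mem_univ, true_and, mem_insert, Fin.ext_iff]
  omega

lemma card_filter_lt {p : ℕ} (t : ℕ) (ht : t ≤ p) :
    (univ.filter (fun k : Fin p => (k : ℕ) < t)).card = t := by
  induction t with
  | zero => simp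
  | succ t ih =>
    rw [filter_lt_succ (show t < p by omega), card_insert_of_notMem (by simp),
      ih (by omega)]

lemma partialSum_succ' {p : ℕ} (lam : Fin p → ℕ) (t : ℕ) (ht : t < p) :
    partialSum lam (t + 1) = partialSum lam t + lam ⟨t, ht⟩ := by
  unfold partialSum
  rw [filter_lt_succ ht, sum_insert (by simp)]
  ring

lemma partialSum_mono' {p : ℕ} (lam : Fin p → ℕ) : Monotone (partialSum lam) := by
  intro a b hab
  apply Finset.sum_le_sum_of_subset
  intro k
  simp only [mem_filter, mem_univ, true_and]
  omega

lemma partialSum_top {p : ℕ} (lam : Fin p → ℕ) : partialSum lam p = ∑ k, lam k := by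
  unfold partialSum
  rw [filter_true_of_mem (fun k _ => k.isLt)]

lemma strictMono_val_le {n p : ℕ} (f : Fin n → Fin p) (hf : StrictMono f) :
    ∀ v (h : v < n), v ≤ (f ⟨v, h⟩ : ℕ) := by
  intro v
  induction v with
  | zero => intro h; omega
  | succ v ih =>
    intro h
    have h' : v < n := by omega
    have h1 := hf (show (⟨v, h'⟩ : Fin n) < ⟨v + 1, h⟩ by simp [Fin.lt_def])
    have h2 := ih h'
    simp only [Fin.lt_def] at h1
    omega

lemma sum_subset_le_partialSum {p : ℕ} (lam : Fin p → ℕ)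
    (hanti : ∀ k l : Fin p, k ≤ l → lam l ≤ lam k) (S : Finset (Fin p)) :
    ∑ k ∈ S, lam k ≤ partialSum lam S.card := by
  set n := S.card with hn
  have hnp : n ≤ p := by
    have := Finset.card_le_card (subset_univ S)
    simpa using this
  set e := S.orderEmbOfFin hn.symm with he
  have himg : (univ : Finset (Fin n)).image e = S := by
    apply Finset.coe_injective
    rw [coe_image, coe_univ, Set.image_univ]
    exact S.range_orderEmbOfFin hn.symm
  have h1 : ∑ k ∈ S, lam k = ∑ i : Fin n, lam (e i) := by
    rw [← himg, Finset.sum_image (fun a _ b _ h => e.injective h)]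
  have hle : ∀ i : Fin n, lam (e i) ≤ lam (Fin.castLE hnp i) := by
    intro i
    apply hanti
    rw [Fin.le_def]
    exact strictMono_val_le e e.strictMono i i.isLt
  have himg2 : (univ : Finset (Fin n)).image (Fin.castLE hnp) =
      univ.filter (fun k : Fin p => (k : ℕ) < n) := by
    ext k
    simp only [mem_image, mem_univ, true_and, mem_filter]
    constructor
    · rintro ⟨i, rfl⟩; exact i.isLt
    · intro hk; exact ⟨⟨k, hk⟩, rfl⟩
  have h2 : partialSum lam n = ∑ i : Fin n, lam (Fin.castLE hnp i) := by
    unfold partialSum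
    rw [← himg2, Finset.sum_image (fun a _ b _ h => Fin.castLE_injective hnp h)]
  rw [h1, h2]
  exact Finset.sum_le_sum (fun i _ => hle i)

theorem stmt1 (r p : ℕ) (hp : 1 ≤ p) (lam : Fin p → ℕ)
    (hpos : ∀ k, 1 ≤ lam k) (hanti : ∀ k l : Fin p, k ≤ l → lam l ≤ lam k)
    (hsum : ∑ k, lam k = r)
    (d : ℕ) (hd1 : 1 ≤ d) (hdp : d ≤ p)
    (j : ℕ) (hj1 : 1 ≤ j) (hjr : j ≤ r) (m : ℤ) :
    NonNegOfLevel lam d j m ↔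
      (if lamIdx lam j ≤ d then 0 ≤ m else (d : ℤ) - (lamIdx lam j : ℤ) ≤ m) := by
  set L := lamIdx lam j with hLdef
  have hjp : j ≤ partialSum lam p := by rw [partialSum_top, hsum]; exact hjr
  have hne : {t : ℕ | j ≤ partialSum lam t}.Nonempty := ⟨p, hjp⟩
  have hmemL : j ≤ partialSum lam L := by
    rw [hLdef]
    exact Nat.sInf_mem hne
  have hLp : L ≤ p := by
    rw [hLdef]
    exact Nat.sInf_le (show p ∈ {t : ℕ | j ≤ partialSum lam t} from hjp)
  have hL1 : 1 ≤ L := by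
    by_contra h
    have hL0 : L = 0 := by omega
    rw [hL0] at hmemL
    simp [partialSum] at hmemL
    omega
  have hltL : ∀ t, t < L → partialSum lam t < j := by
    intro t ht
    by_contra h
    push_neg at h
    have h2 : L ≤ t := Nat.sInf_le (show t ∈ {t : ℕ | j ≤ partialSum lam t} from h)
    omega
  -- the canonical minimal decomposition of j
  set jv0 : Fin p → ℕ := fun k => min (lam k) (j - partialSum lam k) with hjv0
  have hjv0_le : ∀ k, jv0 k ≤ lam k := fun k => min_le_left _ _
  have hjv0_pos : ∀ k : Fin p, 0 < jv0 k ↔ (k : ℕ) < L := by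
    intro k
    constructor
    · intro hk
      by_contra h
      push_neg at h
      have h2 : j ≤ partialSum lam k := le_trans hmemL (partialSum_mono' lam h)
      have h3 : j - partialSum lam (k : ℕ) = 0 := by omega
      simp [hjv0, h3] at hk
    · intro hk
      have h1 := hltL k hk
      have h2 := hpos k
      exact lt_min (h2) (by omega)
  have hsum_jv0 : ∑ k, jv0 k = j := by
    have key : ∀ t, t ≤ p →
        ∑ k ∈ univ.filter (fun k : Fin p => (k : ℕ) < t), jv0 k
          = min (partialSum lam t) j := by
      intro t
      induction t with
      | zero => intro _; simp [partialSum]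
      | succ t ih =>
        intro ht
        have htp : t < p := by omega
        rw [filter_lt_succ htp, sum_insert (by simp), ih (by omega),
          partialSum_succ' lam t htp]
        show min (lam ⟨t, htp⟩) (j - partialSum lam t) + min (partialSum lam t) j
          = min (partialSum lam t + lam ⟨t, htp⟩) j
        rw [Nat.min_def, Nat.min_def, Nat.min_def]
        split_ifs <;> omega
    have h1 := key p le_rfl
    rw [filter_true_of_mem (fun k _ => k.isLt), partialSum_top, hsum,
      Nat.min_eq_right hjr] at h1
    exact h1
  constructor
  · -- forward direction
    intro h
    rcases h with h | h
    · split_ifs with hc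
      · exact h
      · push_neg at hc
        have : (d : ℤ) ≤ (L : ℤ) := by exact_mod_cast hc.le
        linarith
    · by_cases hm : 0 ≤ m
      · split_ifs with hc
        · exact hm
        · push_neg at hc
          have : (d : ℤ) ≤ (L : ℤ) := by exact_mod_cast hc.le
          linarith
      push_neg at hm
      set c : ℕ := L - d with hc
      have hkey : 0 ≤ m + (c : ℤ) := by
        by_contra hneg
        push_neg at hneg
        have hcL : c < L := by omega
        have hcp : c < p := lt_of_lt_of_le hcL hLp
        set mv : Fin p → ℤ := fun k =>
          (if (k : ℕ) < c then (-1 : ℤ) else 0) +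
          (if (k : ℕ) = c then m + c else 0) with hmv
        have hsum_mv : ∑ k, mv k = m := by
          rw [hmv]
          rw [Finset.sum_add_distrib, Finset.sum_ite, Finset.sum_const,
            Finset.sum_const_zero, card_filter_lt c (by omega)]
          have heq : ∀ k : Fin p, ((k : ℕ) = c) = (k = ⟨c, hcp⟩) := by
            intro k; simp [Fin.ext_iff]
          simp only [heq]
          rw [Finset.sum_ite_eq' univ (⟨c, hcp⟩ : Fin p) (fun _ => m + (c : ℤ))]
          simp
        have hzero_mv : ∀ k, jv0 k = 0 → mv k = 0 := by
          intro k hk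
          have h1 : ¬ (k : ℕ) < L := by
            intro h2
            have := (hjv0_pos k).mpr h2
            omega
          simp [hmv, show ¬ (k : ℕ) < c by omega, show ¬ (k : ℕ) = c by omega]
        have h1 := h jv0 mv hjv0_le hsum_jv0 hsum_mv hzero_mv
        rcases h1 with ⟨k, hk⟩ | hcard
        · have : mv k ≤ 0 := by
            simp only [hmv]
            split_ifs <;> omega
          omega
        · have hiff : (univ.filter (fun k => mv k = 0 ∧ 0 < jv0 k)) =
              univ.filter (fun k : Fin p => c < (k : ℕ) ∧ (k : ℕ) < L) := by
            ext k
            simp only [mem_filter, mem_univ, true_and, hmv, hjv0_pos]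
            constructor
            · rintro ⟨h1, h2⟩
              refine ⟨?_, h2⟩
              by_contra h3
              push_neg at h3
              rcases lt_or_eq_of_le h3 with h4 | h4
              · simp [h4] at h1
                omega
              · simp [h4.symm, show ¬ (c < c) by omega] at h1
                omega
            · rintro ⟨h1, h2⟩
              refine ⟨?_, h2⟩
              simp [show ¬ (k : ℕ) < c by omega, show ¬ (k : ℕ) = c by omega]
          rw [hiff] at hcard
          have hsplit : (univ.filter (fun k : Fin p => (k : ℕ) < L)) =
              (univ.filter (fun k : Fin p => (k : ℕ) < c + 1)) ∪
              (univ.filter (fun k : Fin p => c < (k : ℕ) ∧ (k : ℕ) < L)) := by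
            ext k
            simp only [mem_filter, mem_univ, true_and, mem_union]
            omega
          have hdisj : Disjoint (univ.filter (fun k : Fin p => (k : ℕ) < c + 1))
              (univ.filter (fun k : Fin p => c < (k : ℕ) ∧ (k : ℕ) < L)) := by
            rw [Finset.disjoint_left]
            intro k hk1 hk2
            simp only [mem_filter, mem_univ, true_and] at hk1 hk2
            omega
          have hcards := congrArg Finset.card hsplit
          rw [Finset.card_union_of_disjoint hdisj, card_filter_lt L hLp,
            card_filter_lt (c + 1) (by omega)] at hcards
          omega
      split_ifs with hcond
      · have hc0 : c = 0 := by omega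
        rw [hc0] at hkey
        simpa using hkey
      · push_neg at hcond
        have : (c : ℤ) = (L : ℤ) - (d : ℤ) := by
          have : c = L - d := hc
          omega
        omega
  · -- backward direction
    intro h
    by_cases hm : 0 ≤ m
    · exact Or.inl hm
    push_neg at hm
    right
    intro jv mv hle hsj hsm hz
    by_cases hpos' : ∃ k, 0 < mv k
    · exact Or.inl hpos'
    right
    push_neg at hpos'
    set S := univ.filter (fun k => 0 < jv k) with hS
    set Z := univ.filter (fun k => mv k = 0 ∧ 0 < jv k) with hZ
    set N := S.filter (fun k => ¬ mv k = 0) with hN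
    have hZ' : Z = S.filter (fun k => mv k = 0) := by
      rw [hZ, hS, Finset.filter_filter]
      apply Finset.filter_congr
      intro k _
      simp [and_comm]
    have hSZN : S.card = Z.card + N.card := by
      rw [hZ', hN]
      exact (Finset.card_filter_add_card_filter_not (fun k => mv k = 0)).symm
    have hNcard : (N.card : ℤ) ≤ -m := by
      have h1 : ∑ k ∈ N, mv k = m := by
        rw [← hsm]
        apply Finset.sum_subset (subset_univ N)
        intro k _ hk
        by_contra hmv0
        apply hk
        rw [hN, hS]
        simp only [mem_filter, mem_univ, true_and]
        refine ⟨Nat.pos_of_ne_zero ?_, hmv0⟩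
        intro hjk
        exact hmv0 (hz k hjk)
      have h2 : ∑ k ∈ N, mv k ≤ ∑ _k ∈ N, (-1 : ℤ) := by
        apply Finset.sum_le_sum
        intro k hk
        have h3 := hpos' k
        have h4 : ¬ mv k = 0 := (Finset.mem_filter.mp hk).2
        omega
      rw [Finset.sum_const, h1] at h2
      simp at h2
      omega
    have hLS : L ≤ S.card := by
      have hjS : ∑ k ∈ S, jv k = j := by
        rw [← hsj]
        apply Finset.sum_subset (subset_univ S)
        intro k _ hk
        rw [hS] at hk
        simp only [mem_filter, mem_univ, true_and] at hk
        omega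
      have : j ≤ partialSum lam S.card := calc
        j = ∑ k ∈ S, jv k := hjS.symm
        _ ≤ ∑ k ∈ S, lam k := Finset.sum_le_sum (fun k _ => hle k)
        _ ≤ partialSum lam S.card := sum_subset_le_partialSum lam hanti S
      exact Nat.sInf_le (show S.card ∈ {t : ℕ | j ≤ partialSum lam t} from this)
    have hdL : (d : ℤ) - (L : ℤ) ≤ m := by
      by_cases hLd : L ≤ d
      · rw [if_pos hLd] at h
        omega
      · rw [if_neg hLd] at h
        exact h
    show d ≤ Z.card
    omega
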